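/- arXiv:1409.0936 — 5 statements merged into one kernel-verified Lean document; each statement's English description precedes it below -/
import Mathlib

section
/- Let g be a left Leibniz algebra over a field F and let N be a subspace of g such that [a,b] = 0 for all a, b in N and [x,y] ∈ N for all x, y in g. For x in g define linear maps l_x, r_x : N → N by l_x(n) = [x,n] and r_x(n) = [n,x]. If there exists y ∈ g such that r_y : N → N is injective, then for every x ∈ g one has l_x = −r_x, i.e., [x,n] = −[n,x] for all x ∈ g and n ∈ N. -/
/-- If `N` is an abelian subspace of a left Leibniz algebra `g` containing `[g,g]`,
and some right-multiplication operator `r_y` is injective on `N`, then `l_x = -r_x`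
on `N` for every `x`. -/
theorem left_mult_eq_neg_right_mult_of_injective_right_mult
    {F : Type*} [Field F] {g : Type*} [AddCommGroup g] [Module F g]
    (B : g →ₗ[F] g →ₗ[F] g)
    (leib : ∀ x y z : g, B x (B y z) = B (B x y) z + B y (B x z))
    (N : Submodule F g)
    (habelian : ∀ a ∈ N, ∀ b ∈ N, B a b = 0)
    (hcl : ∀ x y : g, B x y ∈ N)
    (hinj : ∃ y : g, ∀ n₁ ∈ N, ∀ n₂ ∈ N, B n₁ y = B n₂ y → n₁ = n₂) :
    ∀ x : g, ∀ n ∈ N, B x n = - B n x := by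
  obtain ⟨y, hy⟩ := hinj
  intro x n hn
  have h1 : B n (B x y) = B (B n x) y + B x (B n y) := leib n x y
  have h2 : B x (B n y) = B (B x n) y + B n (B x y) := leib x n y
  have h0 : B n (B x y) = 0 := habelian n hn _ (hcl x y)
  have hsum : B (B x n + B n x) y = 0 := by
    have h3 := h1
    rw [h2, h0] at h3
    simp only [map_add, LinearMap.add_apply]
    rw [add_comm]
    simpa using h3.symm
  have h5 := hy (B x n + B n x) (N.add_mem (hcl x n) (hcl n x)) 0 N.zero_mem
    (by simpa using hsum)
  exact eq_neg_of_add_eq_zero_left h5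
end

section
/- Let g be a finite-dimensional left Leibniz algebra over a field F, let N be a subspace of g with [a,b] = 0 for all a, b ∈ N and [x,y] ∈ N for all x, y ∈ g, and suppose g = N ⊕ span{x} for some x ∈ g. If the linear map r_x : N → N, r_x(n) = [n,x], is bijective, then the bracket of g is antisymmetric: [u,v] = −[v,u] for all u, v ∈ g; in particular g is a Lie algebra. -/
/-- A one-dimensional extension of an abelian nilradical with bijective right action
is a Lie algebra: if `g = N ⊕ span{x}` with `N` abelian, `[g,g] ⊆ N`, and
`r_x : N → N` bijective, then the bracket is antisymmetric. -/
theorem one_dim_extension_with_bijective_right_action_is_Lie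
    {F : Type*} [Field F] {g : Type*} [AddCommGroup g] [Module F g]
    [FiniteDimensional F g]
    (B : g →ₗ[F] g →ₗ[F] g)
    (leib : ∀ x y z : g, B x (B y z) = B (B x y) z + B y (B x z))
    (N : Submodule F g)
    (habelian : ∀ a ∈ N, ∀ b ∈ N, B a b = 0)
    (hcl : ∀ x y : g, B x y ∈ N)
    (x : g)
    (hcompl : IsCompl N (Submodule.span F {x}))
    (hbij : Function.Bijective (fun n : N => (⟨B (n : g) x, hcl (n : g) x⟩ : N))) :
    ∀ u v : g, B u v = - B v u := by
  have hxx : B x x = 0 := by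
    have h := leib x x x
    have h0 : B (B x x) x = 0 := (right_eq_add.mp h)
    have : (⟨B x x, hcl x x⟩ : N) = 0 := by
      apply hbij.injective (a₂ := (0 : N))
      simp [Subtype.ext_iff, h0]
    exact Subtype.ext_iff.mp this
  have key : ∀ n ∈ N, B x n = - B n x := by
    intro n hn
    obtain ⟨m, hm⟩ := hbij.surjective ⟨n, hn⟩
    have hm' : B (m : g) x = n := congrArg Subtype.val hm
    have h := leib m x x
    rw [hxx, map_zero, hm'] at h
    exact eq_neg_of_add_eq_zero_right h.symm
  -- decomposition of an arbitrary element
  have hdecomp : ∀ u : g, ∃ n ∈ N, ∃ c : F, u = n + c • x := by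
    intro u
    have hu : u ∈ N ⊔ Submodule.span F {x} := by
      rw [hcompl.sup_eq_top]; trivial
    obtain ⟨n, hn, z, hz, huz⟩ := Submodule.mem_sup.mp hu
    obtain ⟨c, rfl⟩ := Submodule.mem_span_singleton.mp hz
    exact ⟨n, hn, c, huz.symm⟩
  intro u v
  obtain ⟨n, hn, c, rfl⟩ := hdecomp u
  obtain ⟨m, hm, d, rfl⟩ := hdecomp v
  simp only [map_add, map_smul, LinearMap.add_apply, LinearMap.smul_apply,
    habelian n hn m hm, hxx, smul_zero, zero_add, add_zero, habelian m hm n hn,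
    key n hn, key m hm]
  module
end

section
/- Let g be a 2-dimensional left Leibniz algebra over ℂ that is not a Lie algebra. Suppose g has a 1-dimensional subspace N with [N,N] = 0 and [g,g] ⊆ N, and suppose no element y ∈ g with y ∉ N is nilpotent (i.e., for y ∉ N, the operators z ↦ [y,z] and z ↦ [z,y] on g are not both nilpotent). Then there exist a basis {n, x} of g with n ∈ N and a scalar σ ∈ ℂ such that [n,n] = 0, [n,x] = 0, [x,n] = n, and [x,x] = σ n. -/
open Module Submodule

private lemma pair_basis_aux {g : Type*} [AddCommGroup g] [Module ℂ g]
    (hdim : Module.finrank ℂ g = 2) (n x : g) (hn : n ≠ 0)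
    (hx : x ∉ Submodule.span ℂ ({n} : Set g)) :
    LinearIndependent ℂ ![n, x] ∧ Submodule.span ℂ ({n, x} : Set g) = ⊤ := by
  have hli : LinearIndependent ℂ ![n, x] := by
    rw [LinearIndependent.pair_iff]
    intro s t hst
    have ht : t = 0 := by
      by_contra ht
      apply hx
      have h1 : t • x = (-s) • n := by linear_combination (norm := module) hst
      have h2 : x = (-(t⁻¹ * s)) • n := by
        calc x = t⁻¹ • (t • x) := by rw [smul_smul, inv_mul_cancel₀ ht, one_smul]
        _ = t⁻¹ • ((-s) • n) := by rw [h1]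
        _ = (-(t⁻¹ * s)) • n := by rw [smul_smul]; module
      rw [h2]
      exact Submodule.smul_mem _ _ (Submodule.mem_span_singleton_self n)
    subst ht
    simp only [zero_smul, add_zero, smul_eq_zero] at hst
    exact ⟨hst.resolve_right hn, rfl⟩
  refine ⟨hli, ?_⟩
  have := hli.span_eq_top_of_card_eq_finrank (by simp [hdim])
  have hr : Set.range ![n, x] = {n, x} := by
    ext z; simp [Matrix.range_cons, Matrix.range_empty]; tauto
  rwa [hr] at this

/-- Classification of non-Lie Leibniz algebras `L(1,1)`: a 2-dimensional non-Lie
Leibniz algebra over `ℂ` with a 1-dimensional abelian `N ⊇ [g,g]` such that no element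
outside `N` is nilpotent has a basis `{n, x}` with `n ∈ N`, `[n,n] = [n,x] = 0`,
`[x,n] = n`, `[x,x] = σ n`. -/
theorem classification_L11_nonLie
    {g : Type*} [AddCommGroup g] [Module ℂ g]
    (B : g →ₗ[ℂ] g →ₗ[ℂ] g)
    (leib : ∀ x y z : g, B x (B y z) = B (B x y) z + B y (B x z))
    (hdim : Module.finrank ℂ g = 2)
    (hnotLie : ¬ ∀ u v : g, B u v = - B v u)
    (N : Submodule ℂ g)
    (hNdim : Module.finrank ℂ N = 1)
    (habelian : ∀ a ∈ N, ∀ b ∈ N, B a b = 0)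
    (hcl : ∀ u v : g, B u v ∈ N)
    (hnonnilp : ∀ y : g, y ∉ N →
      ¬ (IsNilpotent (B y : Module.End ℂ g) ∧ IsNilpotent (B.flip y : Module.End ℂ g))) :
    ∃ (n x : g) (σ : ℂ), n ∈ N ∧
      LinearIndependent ℂ ![n, x] ∧
      Submodule.span ℂ {n, x} = ⊤ ∧
      B n n = 0 ∧ B n x = 0 ∧ B x n = n ∧ B x x = σ • n := by
  -- generator of N
  obtain ⟨⟨n₀, hn₀N⟩, hn₀ne, hgen⟩ := finrank_eq_one_iff'.mp hNdim
  have hn₀ : n₀ ≠ 0 := by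
    intro h; exact hn₀ne (by ext; simp [h])
  have hmemN : ∀ m ∈ N, ∃ c : ℂ, m = c • n₀ := by
    intro m hm
    obtain ⟨c, hc⟩ := hgen ⟨m, hm⟩
    exact ⟨c, by simpa using congrArg (Subtype.val) hc.symm⟩
  have hcoef : ∀ c d : ℂ, c • n₀ = d • n₀ → c = d := by
    intro c d h
    have : (c - d) • n₀ = 0 := by rw [sub_smul, h, sub_self]
    rcases smul_eq_zero.mp this with h' | h'
    · exact sub_eq_zero.mp h'
    · exact absurd h' hn₀
  -- pick x₀ outside N
  have hxe : ∃ x₀, x₀ ∉ N := by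
    by_contra h
    push_neg at h
    have hN : N = ⊤ := Submodule.eq_top_iff'.mpr h
    rw [hN, finrank_top, hdim] at hNdim
    omega
  obtain ⟨x₀, hx₀⟩ := hxe
  have hx₀s : x₀ ∉ Submodule.span ℂ ({n₀} : Set g) := by
    intro h
    exact hx₀ (Submodule.span_le.mpr (Set.singleton_subset_iff.mpr hn₀N) h)
  obtain ⟨hli₀, hsp₀⟩ := pair_basis_aux hdim n₀ x₀ hn₀ hx₀s
  obtain ⟨α, hα⟩ := hmemN _ (hcl n₀ x₀)
  obtain ⟨β, hβ⟩ := hmemN _ (hcl x₀ n₀)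
  obtain ⟨γ, hγ⟩ := hmemN _ (hcl x₀ x₀)
  have h00 : B n₀ n₀ = 0 := habelian _ hn₀N _ hn₀N
  -- Leibniz consequences
  have e1 := leib n₀ x₀ x₀
  rw [hγ, hα] at e1
  simp only [map_smul, LinearMap.smul_apply, LinearMap.map_smul, h00, hα, hβ,
    smul_zero] at e1
  -- e1 : 0 = α • (α • n₀) + α • (β • n₀)  (roughly)
  have q1 : α * (α + β) = 0 := by
    have := hcoef (α * (α + β)) 0 (by
      rw [zero_smul]
      linear_combination (norm := module) -e1)
    simpa using this
  have e2 := leib x₀ x₀ x₀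
  rw [hγ] at e2
  simp only [map_smul, LinearMap.smul_apply, LinearMap.map_smul, hα, hβ] at e2
  have q2 : γ * α = 0 := by
    have := hcoef (γ * α) 0 (by
      rw [zero_smul]
      linear_combination (norm := module) -e2)
    simpa using this
  by_cases hA : α = 0
  · -- main case : α = 0, so β ≠ 0 by the nilpotency hypothesis
    have hBne : β ≠ 0 := by
      intro hB
      refine hnonnilp x₀ hx₀ ⟨⟨2, ?_⟩, ⟨2, ?_⟩⟩
      · apply LinearMap.ext
        intro z
        rw [sq, Module.End.mul_apply]
        obtain ⟨c, hc⟩ := hmemN _ (hcl x₀ z)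
        rw [show B x₀ z = c • n₀ from hc, map_smul, hβ, hB, zero_smul, smul_zero]
        simp
      · apply LinearMap.ext
        intro z
        rw [sq, Module.End.mul_apply]
        obtain ⟨c, hc⟩ := hmemN _ (hcl z x₀)
        simp only [LinearMap.flip_apply]
        rw [show B z x₀ = c • n₀ from hc, map_smul, LinearMap.smul_apply, hα, hA,
          zero_smul, smul_zero]
        simp
    have hxN : β⁻¹ • x₀ ∉ Submodule.span ℂ ({n₀} : Set g) := by
      intro h
      apply hx₀s
      have := Submodule.smul_mem _ β h
      rwa [smul_smul, mul_inv_cancel₀ hBne, one_smul] at this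
    obtain ⟨hli, hsp⟩ := pair_basis_aux hdim n₀ (β⁻¹ • x₀) hn₀ hxN
    refine ⟨n₀, β⁻¹ • x₀, β⁻¹ * β⁻¹ * γ, hn₀N, hli, hsp, h00, ?_, ?_, ?_⟩
    · rw [map_smul, hα, hA, zero_smul, smul_zero]
    · rw [map_smul, LinearMap.smul_apply, hβ, smul_smul, inv_mul_cancel₀ hBne, one_smul]
    · simp only [map_smul, LinearMap.smul_apply, hγ, smul_smul]
      module
    -- done main case
  · -- α ≠ 0 : the algebra would be a Lie algebra, contradiction
    exfalso
    have hg : γ = 0 := (mul_eq_zero.mp q2).resolve_right hA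
    have hb : β = -α := by
      have h' := (mul_eq_zero.mp q1).resolve_left hA
      linear_combination h'
    apply hnotLie
    have key : B + B.flip = 0 := by
      apply LinearMap.ext_on hsp₀
      intro u hu
      apply LinearMap.ext_on hsp₀
      intro v hv
      simp only [Set.mem_insert_iff, Set.mem_singleton_iff] at hu hv
      simp only [LinearMap.add_apply, LinearMap.flip_apply, LinearMap.zero_apply]
      rcases hu with rfl | rfl <;> rcases hv with rfl | rfl
      · rw [h00]; simp
      · rw [hα, hβ, hb]; module
      · rw [hα, hβ, hb]; module
      · rw [hγ, hg]; simp
    intro u v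
    have h := LinearMap.congr_fun (LinearMap.congr_fun key u) v
    simp only [LinearMap.add_apply, LinearMap.flip_apply, LinearMap.zero_apply] at h
    linear_combination (norm := module) h
end

section
/- Let R ∈ M_3(ℂ) be the matrix with R_{12} = 1 and all other entries 0, and let L ∈ M_3(ℂ) satisfy LR = RL and (R + L)R = 0. Then the first column of L is zero and the second row of L is zero, i.e., L = [[0,a,b],[0,0,0],[0,c,d]] for some a, b, c, d ∈ ℂ. Moreover, L is nilpotent if and only if d = L_{33} = 0. -/
/-- Case 2 of the classification of `L(3,1)`: if `R` has `R₁₂ = 1` and all other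
entries `0`, and `L` satisfies `LR = RL` and `(R + L)R = 0`, then the first column and
the second row of `L` vanish, and `L` is nilpotent iff `L₃₃ = 0`. -/
theorem L31_case2_L_form
    (L : Matrix (Fin 3) (Fin 3) ℂ)
    (hcomm : L * !![0, 1, 0; 0, 0, 0; 0, 0, 0] = !![0, 1, 0; 0, 0, 0; 0, 0, 0] * L)
    (hrel : (!![0, 1, 0; 0, 0, 0; 0, 0, 0] + L) * !![0, 1, 0; 0, 0, 0; 0, 0, 0] = 0) :
    (∀ i, L i 0 = 0) ∧ (∀ j, L 1 j = 0) ∧ (IsNilpotent L ↔ L 2 2 = 0) := by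
  -- entry equations from `hrel` : first column of `L` vanishes
  have hcol : ∀ i, L i 0 = 0 := by
    intro i
    have h := congrFun (congrFun hrel i) 1
    fin_cases i <;>
      simpa [Matrix.mul_apply, Fin.sum_univ_three, Matrix.vecHead, Matrix.vecTail] using h
  -- entry equations from `hcomm` : second row of `L` vanishes
  have hrow : ∀ j, L 1 j = 0 := by
    intro j
    have h0 := congrFun (congrFun hcomm 0) 0
    have h1 := congrFun (congrFun hcomm 0) 1
    have h2 := congrFun (congrFun hcomm 0) 2
    simp [Matrix.mul_apply, Fin.sum_univ_three, Matrix.vecHead, Matrix.vecTail] at h0 h1 h2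
    fin_cases j
    · simpa using h0.symm
    · have := hcol 0
      simp [this] at h1
      simpa using h1.symm
    · simpa using h2.symm
  refine ⟨hcol, hrow, ?_, ?_⟩
  · -- nilpotent → L 2 2 = 0
    intro hn
    have key0 : ∀ n, (L ^ n) 2 0 = 0 := by
      intro n
      induction n with
      | zero => simp [Matrix.one_apply]
      | succ n ih =>
        rw [pow_succ, Matrix.mul_apply, Fin.sum_univ_three]
        simp [hcol]
    have key : ∀ n, (L ^ n) 2 2 = (L 2 2) ^ n := by
      intro n
      induction n with
      | zero => simp
      | succ n ih =>
        rw [pow_succ, Matrix.mul_apply, Fin.sum_univ_three, ih, hrow 2, key0 n]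
        ring
    have : IsNilpotent (L 2 2) := by
      obtain ⟨n, hn⟩ := hn
      exact ⟨n, by rw [← key n, hn]; simp⟩
    exact this.eq_zero
  · -- L 2 2 = 0 → nilpotent
    intro hd
    refine ⟨3, ?_⟩
    ext i j
    fin_cases i <;> fin_cases j <;>
      simp [pow_succ, Matrix.mul_apply, Fin.sum_univ_three, hcol 0, hcol 1, hcol 2,
        hrow 0, hrow 1, hrow 2, hd]
end

section
/- Let R ∈ M_3(ℂ) be the nilpotent Jordan block with R_{12} = R_{23} = 1 and all other entries 0, and let L ∈ M_3(ℂ) satisfy LR = RL and (R + L)R = 0. Then L = [[0,−1,a],[0,0,−1],[0,0,0]] for some a ∈ ℂ; in particular L^3 = 0, so both R and L are nilpotent. -/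
/-- Case 3 of the classification of `L(3,1)`: if `R` is the full nilpotent Jordan
block and `L` satisfies `LR = RL` and `(R + L)R = 0`, then
`L = [[0,-1,a],[0,0,-1],[0,0,0]]` for some `a ∈ ℂ`; in particular `L^3 = 0`, so both
`R` and `L` are nilpotent. -/
theorem L31_case3_both_nilpotent
    (L : Matrix (Fin 3) (Fin 3) ℂ)
    (hcomm : L * !![0, 1, 0; 0, 0, 1; 0, 0, 0] = !![0, 1, 0; 0, 0, 1; 0, 0, 0] * L)
    (hrel : (!![0, 1, 0; 0, 0, 1; 0, 0, 0] + L) * !![0, 1, 0; 0, 0, 1; 0, 0, 0] = 0) :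
    (∃ a : ℂ, L = !![0, -1, a; 0, 0, -1; 0, 0, 0]) ∧ L ^ 3 = 0 ∧
      IsNilpotent (!![0, 1, 0; 0, 0, 1; 0, 0, 0] : Matrix (Fin 3) (Fin 3) ℂ) ∧
      IsNilpotent L := by
  rw [← Matrix.ext_iff] at hcomm hrel
  simp only [Matrix.mul_apply, Matrix.add_apply, Fin.sum_univ_three, Matrix.zero_apply] at hcomm hrel
  have hL : L = !![0, -1, L 0 2; 0, 0, -1; 0, 0, 0] := by
    have h1 := hrel 0 1; have h2 := hrel 1 1; have h3 := hrel 2 1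
    have h4 := hrel 0 2; have h5 := hrel 1 2; have h6 := hrel 2 2
    have h7 := hcomm 0 2; have h8 := hcomm 1 2; have h9 := hcomm 2 2
    simp [Matrix.vecHead, Matrix.vecTail] at h1 h2 h3 h4 h5 h6 h7 h8 h9
    have e1 : L 0 1 = -1 := by linear_combination h4
    have e2 : L 1 2 = -1 := by linear_combination h4 - h7
    have e3 : L 2 2 = 0 := by linear_combination h5 - h8
    ext i j
    fin_cases i <;> fin_cases j <;>
      simp [Matrix.vecHead, Matrix.vecTail, h1, h2, h3, h5, h6, e1, e2, e3]
  rw [hL]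
  refine ⟨⟨L 0 2, rfl⟩, ?_, ⟨3, ?_⟩, ⟨3, ?_⟩⟩ <;>
    · ext i j
      fin_cases i <;> fin_cases j <;>
        simp [pow_succ, Matrix.mul_apply, Fin.sum_univ_three, Matrix.vecHead, Matrix.vecTail]
end
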